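/- There exists a constant c > 0 such that for every integer d ≥ 1 the following holds. Let E = {(e_i, s/√d) : i ∈ {1, …, d}, s ∈ {−1, 1}} ⊆ ℝ^d × ℝ be a collection of 2d linear equations, where e_i is the i-th standard basis vector of ℝ^d. Then there exists a finite set T ⊆ ℝ^d with every coordinate of every a ∈ T in {−1/√d, 1/√d} (so every a ∈ T is a unit vector), |T| ≥ e^{c·d}, ‖u − v‖₂ ≥ 1/10 for all distinct u, v ∈ T, and for every a ∈ T one has |{(x, y) ∈ E : y = ⟨x, a⟩}| = d; i.e., every a ∈ T exactly satisfies half of the 2d equations in E. -/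

import Mathlib

open scoped Classical

noncomputable def hamD {d : ℕ} (u v : Fin d → Bool) : ℕ :=
  (Finset.univ.filter fun i => u i ≠ v i).card

lemma hamD_symm {d : ℕ} (u v : Fin d → Bool) : hamD u v = hamD v u := by
  unfold hamD; congr 1; ext i; simp [ne_comm]

lemma hamD_self {d : ℕ} (u : Fin d → Bool) : hamD u u = 0 := by simp [hamD]

-- ball size bound
lemma ball_card_le (d t : ℕ) (a : Fin d → Bool) :
    (Finset.univ.filter fun y => hamD a y < t).card ≤
      ∑ j ∈ Finset.range t, Nat.choose d j := by
  classical
  have hinj : ∀ y ∈ (Finset.univ.filter fun y => hamD a y < t),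
      (Finset.univ.filter fun i => a i ≠ y i) ∈
        (Finset.univ : Finset (Fin d)).powerset.filter (fun S => S.card < t) := by
    intro y hy
    simp only [Finset.mem_filter, Finset.mem_univ, true_and] at hy ⊢
    exact ⟨Finset.mem_powerset.2 (Finset.subset_univ _), hy⟩
  have h1 : (Finset.univ.filter fun y => hamD a y < t).card ≤
      ((Finset.univ : Finset (Fin d)).powerset.filter (fun S => S.card < t)).card := by
    apply Finset.card_le_card_of_injOn (fun y => Finset.univ.filter fun i => a i ≠ y i) (fun y hy => hinj y hy)
    intro y hy y' hy' h
    simp only at h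
    funext i
    by_cases hb : a i ≠ y i
    · have : i ∈ Finset.univ.filter fun i => a i ≠ y' i := by
        rw [← h]; simp [hb]
      simp only [Finset.mem_filter] at this
      cases hu : y i <;> cases hu' : y' i <;> simp_all
    · have : i ∉ Finset.univ.filter fun i => a i ≠ y' i := by
        rw [← h]; simp [hb]
      simp only [Finset.mem_filter, Finset.mem_univ, true_and, not_not] at this
      push_neg at hb
      rw [← hb, this]
  refine h1.trans ?_
  have hsub : ((Finset.univ : Finset (Fin d)).powerset.filter (fun S => S.card < t)) ⊆
      (Finset.range t).biUnion (fun j => Finset.powersetCard j Finset.univ) := by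
    intro S hS
    simp only [Finset.mem_filter, Finset.mem_powerset] at hS
    refine Finset.mem_biUnion.2 ⟨S.card, Finset.mem_range.2 hS.2, ?_⟩
    simp [Finset.mem_powersetCard, hS.1]
  refine (Finset.card_le_card hsub).trans ?_
  refine (Finset.card_biUnion_le).trans ?_
  apply Finset.sum_le_sum
  intro j _
  rw [Finset.card_powersetCard, Finset.card_univ, Fintype.card_fin]

-- GV existence
lemma exists_sep (d t : ℕ) (ht : 1 ≤ t) :
    ∃ A : Finset (Fin d → Bool),
      (∀ u ∈ A, ∀ v ∈ A, u ≠ v → t ≤ hamD u v) ∧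
      2 ^ d ≤ A.card * ∑ j ∈ Finset.range t, Nat.choose d j := by
  classical
  set 𝒜 : Finset (Finset (Fin d → Bool)) :=
    Finset.univ.filter (fun A => ∀ u ∈ A, ∀ v ∈ A, u ≠ v → t ≤ hamD u v) with h𝒜
  have hne : 𝒜.Nonempty := ⟨∅, by simp [h𝒜]⟩
  obtain ⟨A, hA, hmax⟩ := 𝒜.exists_max_image Finset.card hne
  simp only [h𝒜, Finset.mem_filter, Finset.mem_univ, true_and] at hA
  refine ⟨A, hA, ?_⟩
  -- covering
  have hcov : ∀ x : Fin d → Bool, ∃ a ∈ A, hamD a x < t := by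
    intro x
    by_contra hc
    push_neg at hc
    have hx : x ∉ A := fun hx => by
      have := hc x hx; rw [hamD_self] at this; omega
    have hins : insert x A ∈ 𝒜 := by
      simp only [h𝒜, Finset.mem_filter, Finset.mem_univ, true_and]
      intro u hu v hv huv
      by_cases hux : u = x
      · by_cases hvx : v = x
        · exact absurd (hux.trans hvx.symm) huv
        · have hvA : v ∈ A := (Finset.mem_insert.1 hv).resolve_left hvx
          rw [hux, hamD_symm]; exact hc v hvA
      · have huA := (Finset.mem_insert.1 hu).resolve_left hux
        by_cases hvx : v = x
        · rw [hvx]; exact hc u huA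
        · exact hA u huA v ((Finset.mem_insert.1 hv).resolve_left hvx) huv
    have := hmax _ hins
    rw [Finset.card_insert_of_notMem hx] at this
    omega
  have hcover : (Finset.univ : Finset (Fin d → Bool)) ⊆
      A.biUnion (fun a => Finset.univ.filter fun y => hamD a y < t) := by
    intro x _
    obtain ⟨a, ha, hax⟩ := hcov x
    exact Finset.mem_biUnion.2 ⟨a, ha, by simp [hax]⟩
  calc 2 ^ d = (Finset.univ : Finset (Fin d → Bool)).card := by
        simp [Finset.card_univ]
    _ ≤ (A.biUnion (fun a => Finset.univ.filter fun y => hamD a y < t)).card :=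
        Finset.card_le_card hcover
    _ ≤ ∑ a ∈ A, (Finset.univ.filter fun y => hamD a y < t).card :=
        Finset.card_biUnion_le
    _ ≤ ∑ _a ∈ A, ∑ j ∈ Finset.range t, Nat.choose d j :=
        Finset.sum_le_sum fun a _ => ball_card_le d t a
    _ = A.card * ∑ j ∈ Finset.range t, Nat.choose d j := by
        rw [Finset.sum_const, smul_eq_mul]

-- binomial sum bound: 2^(d+1-t) * sum ≤ 3^d for 1 ≤ t ≤ d+1
lemma sum_choose_bound (d t : ℕ) (ht : 1 ≤ t) (htd : t ≤ d + 1) :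
    2 ^ (d + 1 - t) * ∑ j ∈ Finset.range t, Nat.choose d j ≤ 3 ^ d := by
  have h3 : (3 : ℕ) ^ d = ∑ j ∈ Finset.range (d + 1), 1 ^ j * 2 ^ (d - j) * Nat.choose d j := by
    have := add_pow (1 : ℕ) 2 d
    norm_num at this ⊢
    rw [← this]
  rw [h3, Finset.mul_sum]
  calc ∑ j ∈ Finset.range t, 2 ^ (d + 1 - t) * Nat.choose d j
      ≤ ∑ j ∈ Finset.range t, 1 ^ j * 2 ^ (d - j) * Nat.choose d j := by
        refine Finset.sum_le_sum fun j hj => ?_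
        have hj' := Finset.mem_range.1 hj
        rw [one_pow, one_mul]
        exact Nat.mul_le_mul_right _ (Nat.pow_le_pow_right (by norm_num) (by omega))
    _ ≤ ∑ j ∈ Finset.range (d + 1), 1 ^ j * 2 ^ (d - j) * Nat.choose d j :=
        Finset.sum_le_sum_of_subset (Finset.range_subset_range.2 htd)

lemma log3_bound : Real.log 3 ≤ Real.log 2 + 1/2 := by
  have h : (3:ℝ) = 2 * (3/2) := by norm_num
  rw [h, Real.log_mul (by norm_num) (by norm_num)]
  have := Real.log_le_sub_one_of_pos (show (0:ℝ) < 3/2 by norm_num)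
  linarith

lemma count_bound (d t N B : ℕ) (hd : 1 ≤ d) (ht : t ≤ d + 1)
    (htr : (t : ℝ) ≤ d / 400 + 1)
    (h1 : 2 ^ d ≤ N * B) (h2 : 2 ^ (d + 1 - t) * B ≤ 3 ^ d) :
    Real.exp ((1/100) * d) ≤ (N : ℝ) := by
  have key : 2 ^ (2 * d + 1 - t) ≤ N * 3 ^ d := by
    calc 2 ^ (2 * d + 1 - t) = 2 ^ (d + 1 - t) * 2 ^ d := by
          rw [← pow_add]; congr 1; omega
      _ ≤ 2 ^ (d + 1 - t) * (N * B) := Nat.mul_le_mul_left _ h1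
      _ = N * (2 ^ (d + 1 - t) * B) := by ring
      _ ≤ N * 3 ^ d := Nat.mul_le_mul_left _ h2
  have keyR : (2 : ℝ) ^ (2 * d + 1 - t : ℕ) ≤ (N : ℝ) * 3 ^ d := by
    exact_mod_cast key
  have h3pos : (0:ℝ) < 3 ^ d := by positivity
  rw [← div_le_iff₀ h3pos] at keyR
  refine le_trans ?_ keyR
  rw [le_div_iff₀ h3pos]
  have hed : ((2 * d + 1 - t : ℕ) : ℝ) = 2 * d + 1 - t := by
    have : t ≤ 2 * d + 1 := by omega
    push_cast [Nat.cast_sub this]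
    ring
  have hexp : (799/400 : ℝ) * d ≤ ((2 * d + 1 - t : ℕ) : ℝ) := by
    rw [hed]; linarith
  have h2e : (2 : ℝ) ^ (2 * d + 1 - t : ℕ) = Real.exp (((2 * d + 1 - t : ℕ) : ℝ) * Real.log 2) := by
    rw [← Real.exp_log (show (0:ℝ) < 2 by norm_num), ← Real.exp_nat_mul, Real.log_exp]
  have h3e : (3 : ℝ) ^ d = Real.exp ((d : ℝ) * Real.log 3) := by
    rw [← Real.exp_log (show (0:ℝ) < 3 by norm_num), ← Real.exp_nat_mul, Real.log_exp]
  rw [h2e, h3e, ← Real.exp_add]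
  apply Real.exp_le_exp.2
  have hlog2 : (0.6931471803 : ℝ) < Real.log 2 := Real.log_two_gt_d9
  have hlog3 := log3_bound
  have hdpos : (1:ℝ) ≤ (d:ℝ) := by exact_mod_cast hd
  have hstep : (1/100 : ℝ) * d + d * Real.log 3 ≤ (799/400 : ℝ) * d * Real.log 2 := by
    nlinarith [hdpos, hlog2, hlog3]
  calc (1/100 : ℝ) * d + (d:ℝ) * Real.log 3 ≤ (799/400 : ℝ) * d * Real.log 2 := hstep
    _ ≤ ((2 * d + 1 - t : ℕ) : ℝ) * Real.log 2 := by
        apply mul_le_mul_of_nonneg_right hexp (by positivity)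
theorem stmt_18 :
    ∃ c : ℝ, 0 < c ∧
      ∀ d : ℕ, 1 ≤ d →
        ∀ E : Finset (EuclideanSpace ℝ (Fin d) × ℝ),
          (∀ e : EuclideanSpace ℝ (Fin d) × ℝ,
            e ∈ E ↔ ∃ (i : Fin d) (s : ℝ), (s = -1 ∨ s = 1) ∧
              e = (EuclideanSpace.single i (1 : ℝ), s / Real.sqrt d)) →
          ∃ T : Finset (EuclideanSpace ℝ (Fin d)),
            (∀ a ∈ T, ∀ i : Fin d, a i = -(1 / Real.sqrt d) ∨ a i = 1 / Real.sqrt d) ∧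
            (∀ a ∈ T, ‖a‖ = 1) ∧
            Real.exp (c * d) ≤ (T.card : ℝ) ∧
            (∀ u ∈ T, ∀ v ∈ T, u ≠ v → 1 / 10 ≤ ‖u - v‖) ∧
            (∀ a ∈ T, (E.filter (fun e => e.2 = (inner ℝ e.1 a : ℝ))).card = d) := by
  refine ⟨1/100, by norm_num, ?_⟩
  intro d hd E hE
  set t := (d + 399) / 400 with htdef
  have ht1 : 1 ≤ t := by omega
  have htd1 : t ≤ d + 1 := by omega
  obtain ⟨A, hAsep, hAcard⟩ := exists_sep d t ht1
  have hdpos : (0:ℝ) < d := by exact_mod_cast Nat.pos_of_ne_zero (by omega)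
  have hsq : (0:ℝ) < Real.sqrt d := Real.sqrt_pos.2 hdpos
  set vec : (Fin d → Bool) → EuclideanSpace ℝ (Fin d) :=
    fun b => WithLp.toLp 2 (fun i => (if b i then (1:ℝ) else -1) / Real.sqrt d) with hvec
  have hvapp : ∀ b i, vec b i = (if b i then (1:ℝ) else -1) / Real.sqrt d := fun _ _ => rfl
  have hvinj : Function.Injective vec := by
    intro b b' h
    funext i
    have h2 : (if b i then (1:ℝ) else -1) / Real.sqrt d
        = (if b' i then (1:ℝ) else -1) / Real.sqrt d := congrArg (fun v : EuclideanSpace ℝ (Fin d) => v i) h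
    have h3 : (if b i then (1:ℝ) else -1) = (if b' i then (1:ℝ) else -1) := by
      have h4 := congrArg (fun x : ℝ => x * Real.sqrt d) h2
      simpa [div_mul_cancel₀, ne_of_gt hsq] using h4
    cases hb : b i <;> cases hb' : b' i
    · rfl
    · exfalso; rw [hb, hb'] at h3; norm_num at h3
    · exfalso; rw [hb, hb'] at h3; norm_num at h3
    · rfl
  have hcoord : ∀ b i, vec b i = -(1 / Real.sqrt d) ∨ vec b i = 1 / Real.sqrt d := by
    intro b i
    rw [hvapp]
    cases hb : b i
    · left; simp [neg_div]
    · right; simp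
  refine ⟨A.image vec, ?_, ?_, ?_, ?_, ?_⟩
  · rintro a ha i
    obtain ⟨b, _, rfl⟩ := Finset.mem_image.1 ha
    exact hcoord b i
  · rintro a ha
    obtain ⟨b, _, rfl⟩ := Finset.mem_image.1 ha
    rw [EuclideanSpace.norm_eq]
    have hterm : ∀ i : Fin d, ‖vec b i‖ ^ 2 = 1 / d := by
      intro i
      rw [hvapp, Real.norm_eq_abs, sq_abs, div_pow, Real.sq_sqrt hdpos.le]
      cases hb : b i <;> norm_num
    rw [Finset.sum_congr rfl fun i _ => hterm i, Finset.sum_const, Finset.card_univ,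
      Fintype.card_fin, nsmul_eq_mul]
    rw [mul_one_div, div_self (ne_of_gt hdpos), Real.sqrt_one]
  · rw [Finset.card_image_of_injective _ hvinj]
    have htr : (t : ℝ) ≤ (d : ℝ) / 400 + 1 := by
      have h400 : t * 400 ≤ d + 399 := Nat.div_mul_le_self _ _
      have : (t : ℝ) * 400 ≤ (d : ℝ) + 399 := by exact_mod_cast h400
      linarith
    exact count_bound d t A.card _ hd htd1 htr hAcard (sum_choose_bound d t ht1 htd1)
  · rintro u hu v hv huv
    obtain ⟨b, hb, rfl⟩ := Finset.mem_image.1 hu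
    obtain ⟨b', hb', rfl⟩ := Finset.mem_image.1 hv
    have hbb' : b ≠ b' := fun h => huv (by rw [h])
    have hsep := hAsep b hb b' hb' hbb'
    rw [EuclideanSpace.norm_eq]
    have hterm : ∀ i : Fin d, ‖(vec b - vec b') i‖ ^ 2
        = if b i ≠ b' i then 4 / (d:ℝ) else 0 := by
      intro i
      rw [PiLp.sub_apply, hvapp, hvapp, div_sub_div_same, Real.norm_eq_abs, sq_abs,
        div_pow, Real.sq_sqrt hdpos.le]
      cases hbi : b i <;> cases hbi' : b' i <;> norm_num
    have hsum : ∑ i : Fin d, ‖(vec b - vec b') i‖ ^ 2 = (hamD b b' : ℝ) * (4 / d) := by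
      rw [Finset.sum_congr rfl fun i _ => hterm i, ← Finset.sum_filter, Finset.sum_const,
        nsmul_eq_mul]
      rfl
    rw [hsum]
    have htge : (d : ℝ) / 400 ≤ (hamD b b' : ℝ) := by
      have h1 : d ≤ 400 * t := by omega
      have h2 : t ≤ hamD b b' := hsep
      have : (d:ℝ) ≤ 400 * (hamD b b' : ℝ) := by exact_mod_cast h1.trans (by omega)
      linarith
    have hge : (1/100 : ℝ) ≤ (hamD b b' : ℝ) * (4 / d) := by
      have heq : (1/100 : ℝ) = ((d:ℝ)/400) * (4 / d) := by field_simp; ring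
      rw [heq]
      exact mul_le_mul_of_nonneg_right htge (by positivity)
    calc (1/10 : ℝ) = Real.sqrt (1/100) := by
          rw [show (1/100:ℝ) = (1/10)^2 by norm_num, Real.sqrt_sq (by norm_num)]
      _ ≤ Real.sqrt ((hamD b b' : ℝ) * (4 / d)) := Real.sqrt_le_sqrt hge
  · rintro a ha
    obtain ⟨b, _, rfl⟩ := Finset.mem_image.1 ha
    have hinner : ∀ i : Fin d, (inner ℝ (EuclideanSpace.single i (1:ℝ)) (vec b) : ℝ)
        = vec b i := by
      intro i
      rw [EuclideanSpace.inner_single_left]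
      simp
    have hEf : E.filter (fun e => e.2 = (inner ℝ e.1 (vec b) : ℝ))
        = Finset.image (fun i : Fin d => (EuclideanSpace.single i (1:ℝ), vec b i))
            Finset.univ := by
      ext e
      simp only [Finset.mem_filter, Finset.mem_image, Finset.mem_univ, true_and, hE]
      constructor
      · rintro ⟨⟨i, s, hs, rfl⟩, h2⟩
        refine ⟨i, ?_⟩
        simp only at h2
        rw [hinner] at h2
        exact Prod.ext rfl h2.symm
      · rintro ⟨i, rfl⟩
        constructor
        · rcases hcoord b i with h | h
          · exact ⟨i, -1, Or.inl rfl, by rw [h]; simp [neg_div]⟩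
          · exact ⟨i, 1, Or.inr rfl, by rw [h]⟩
        · simp [hinner]
    rw [hEf, Finset.card_image_of_injective _ ?_, Finset.card_univ, Fintype.card_fin]
    intro i j hij
    have h1 := congrArg Prod.fst hij
    simp only at h1
    have h2 : (EuclideanSpace.single i (1:ℝ)) i = (EuclideanSpace.single j (1:ℝ)) i := by
      rw [h1]
    rw [EuclideanSpace.single_apply, EuclideanSpace.single_apply] at h2
    by_contra hne
    rw [if_pos rfl, if_neg (fun hc => hne hc)] at h2
    norm_num at h2
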